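/- Let Y be a real normed space and ι : Y → C(Ω) an injective linear map with ‖ι(g)‖_{C(Ω)} ≤ C_Y ‖g‖_Y for all g ∈ Y, and let K := ι({g ∈ Y : ‖g‖_Y ≤ 1}) be compact in C(Ω). Let Σ ⊆ C(Ω) and δ, μ > 0 with δ ≤ μ², and assume every f ∈ K admits g ∈ Σ ∩ K with ‖f − g‖_{C(Ω)} ≤ δ. Let f ∈ K and w := λ_x(f). Suppose f̂ = ι(ĥ) with ĥ ∈ Y and ι(ĥ) ∈ Σ minimizes the loss: ‖λ_x(ι(ĥ)) − w‖ + μ‖ĥ‖_Y ≤ ‖λ_x(ι(h)) − w‖ + μ‖h‖_Y for every h ∈ Y with ι(h) ∈ Σ. Then, with ε := μ·max(1+μ, C_Y), one has ‖j(f) − j(f̂)‖_X ≤ C_X ε + 2 R(K(w, 2ε))_X. -/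

import Mathlib

/-- Chebyshev radius in `X` of the image under `J` of a set `S`:
`R(S)_X = inf_{z ∈ X} sup_{f ∈ S} ‖J f - z‖`. -/
noncomputable def chebRadMap {A X : Type*} [NormedAddCommGroup X]
    (J : A → X) (S : Set A) : ℝ :=
  ⨅ z : X, ⨆ f : S, ‖J (f : A) - z‖

/-- Weighted euclidean norm on `ℝ^m`: `‖v‖ = ( m⁻¹ ∑ v_j² )^{1/2}`. -/
noncomputable def wNorm {m : ℕ} (v : Fin m → ℝ) : ℝ :=
  Real.sqrt ((∑ j, v j ^ 2) / m)

lemma wNorm_nonneg {m : ℕ} (v : Fin m → ℝ) : 0 ≤ wNorm v :=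
  Real.sqrt_nonneg _

lemma wNorm_le {m : ℕ} {v : Fin m → ℝ} {c : ℝ} (hc : 0 ≤ c)
    (h : ∀ j, |v j| ≤ c) : wNorm v ≤ c := by
  have hsum : (∑ j, v j ^ 2) ≤ m * c ^ 2 := by
    calc (∑ j, v j ^ 2) ≤ ∑ _j : Fin m, c ^ 2 := by
          apply Finset.sum_le_sum
          intro j _
          have := h j
          nlinarith [abs_nonneg (v j), sq_abs (v j)]
      _ = m * c ^ 2 := by simp [mul_comm]
  have : (∑ j, v j ^ 2) / m ≤ c ^ 2 := by
    rcases Nat.eq_zero_or_pos m with hm | hm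
    · simp [hm]; positivity
    · rw [div_le_iff₀ (by positivity)]
      linarith [hsum]
  calc wNorm v ≤ Real.sqrt (c ^ 2) := Real.sqrt_le_sqrt this
    _ = c := by rw [Real.sqrt_sq hc]

lemma wNorm_eq_norm {m : ℕ} (v : Fin m → ℝ) :
    wNorm v = ‖(WithLp.equiv 2 (Fin m → ℝ)).symm v‖ / Real.sqrt m := by
  rw [wNorm, Real.sqrt_div (by positivity), EuclideanSpace.norm_eq]
  congr 1
  congr 1
  apply Finset.sum_congr rfl
  intro j _
  simp [Real.norm_eq_abs, sq_abs, WithLp.equiv_symm_apply, PiLp.toLp_apply]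

lemma wNorm_add_le {m : ℕ} (u v : Fin m → ℝ) :
    wNorm (fun j => u j + v j) ≤ wNorm u + wNorm v := by
  rw [wNorm_eq_norm, wNorm_eq_norm, wNorm_eq_norm, ← add_div]
  rcases Nat.eq_zero_or_pos m with hm | hm
  · subst hm; simp
  · apply div_le_div_of_nonneg_right ?_ (by positivity)
    have : (WithLp.equiv 2 (Fin m → ℝ)).symm (fun j => u j + v j)
        = (WithLp.equiv 2 (Fin m → ℝ)).symm u + (WithLp.equiv 2 (Fin m → ℝ)).symm v := by
      ext j; simp [WithLp.equiv_symm_apply, PiLp.toLp_apply]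
    rw [this]
    exact norm_add_le _ _

lemma wNorm_lambda_le {Z : Type*} [TopologicalSpace Z] [CompactSpace Z]
    {m : ℕ} (x : Fin m → Z) (g h : C(Z, ℝ)) :
    wNorm (fun j => g (x j) - h (x j)) ≤ ‖g - h‖ := by
  apply wNorm_le (norm_nonneg _)
  intro j
  have := ContinuousMap.norm_coe_le_norm (g - h) (x j)
  simpa [Real.norm_eq_abs] using this


set_option maxHeartbeats 1000000 in
/-- Point-value data, convex model class `K = ι(U(Y)) ⊆ C(Ω)`: a minimizer of
`g ↦ ‖λ_x(g) − w‖ + μ‖g‖_Y` over `Σ` satisfies, with `ε := μ·max(1+μ, C_Y)`,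
`‖j(f) − j(f̂)‖_X ≤ C_X ε + 2 R(K(w, 2ε))_X`. -/
theorem stmt_8
    {d : ℕ} {Ω : Set (EuclideanSpace ℝ (Fin d))} [CompactSpace Ω]
    {X : Type*} [NormedAddCommGroup X] [NormedSpace ℝ X] [CompleteSpace X]
    {Y : Type*} [NormedAddCommGroup Y] [NormedSpace ℝ Y]
    {m : ℕ} (hm : 0 < m) (x : Fin m → Ω)
    (J : C(Ω, ℝ) →ₗ[ℝ] X) (hJinj : Function.Injective J)
    (CX : ℝ) (hJ : ∀ g : C(Ω, ℝ), ‖J g‖ ≤ CX * ‖g‖)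
    (ι : Y →ₗ[ℝ] C(Ω, ℝ)) (hι : Function.Injective ι)
    (CY : ℝ) (hCY : ∀ g : Y, ‖ι g‖ ≤ CY * ‖g‖)
    (hK : IsCompact (ι '' {g : Y | ‖g‖ ≤ 1}))
    (Sig : Set C(Ω, ℝ)) (δ μ : ℝ) (hδ : 0 < δ) (hμ : 0 < μ) (hδμ : δ ≤ μ ^ 2)
    (happrox : ∀ f ∈ ι '' {g : Y | ‖g‖ ≤ 1},
      ∃ g ∈ Sig ∩ ι '' {g : Y | ‖g‖ ≤ 1}, ‖f - g‖ ≤ δ)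
    (f : C(Ω, ℝ)) (hf : f ∈ ι '' {g : Y | ‖g‖ ≤ 1})
    (fhat : Y) (hfhat : ι fhat ∈ Sig)
    (hmin : ∀ h : Y, ι h ∈ Sig →
      wNorm (fun j => (ι fhat) (x j) - f (x j)) + μ * ‖fhat‖ ≤
        wNorm (fun j => (ι h) (x j) - f (x j)) + μ * ‖h‖) :
    ‖J f - J (ι fhat)‖ ≤ CX * (μ * max (1 + μ) CY) +
      2 * chebRadMap (fun u => J u)
        {u ∈ ι '' {g : Y | ‖g‖ ≤ 1} |
          wNorm (fun j => u (x j) - f (x j)) ≤ 2 * (μ * max (1 + μ) CY)} := by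
  classical
  set M := max (1 + μ) CY with hMdef
  set ε := μ * M with hεdef
  have hM1 : 1 + μ ≤ M := le_max_left _ _
  have hCYM : CY ≤ M := le_max_right _ _
  have hMpos : 0 < M := lt_of_lt_of_le (by linarith) hM1
  have hεpos : 0 < ε := mul_pos hμ hMpos
  -- CX ≥ 0
  have hCX : 0 ≤ CX := by
    have hle : (1 : ℝ) ≤ ‖ContinuousMap.const Ω (1 : ℝ)‖ := by
      have := ContinuousMap.norm_coe_le_norm (ContinuousMap.const Ω (1 : ℝ)) (x ⟨0, hm⟩)
      simpa using this
    have h2 := hJ (ContinuousMap.const Ω (1 : ℝ))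
    nlinarith [norm_nonneg (J (ContinuousMap.const Ω (1 : ℝ)))]
  -- the approximant of f in Sig ∩ K
  obtain ⟨g, ⟨hgSig, hgK⟩, hfg⟩ := happrox f hf
  obtain ⟨h0, hh0, hgh0⟩ := hgK
  -- loss bound for the minimizer
  have hloss : wNorm (fun j => (ι fhat) (x j) - f (x j)) + μ * ‖fhat‖ ≤ μ * (1 + μ) := by
    have hm1 := hmin h0 (by rwa [hgh0])
    have h2 : wNorm (fun j => (ι h0) (x j) - f (x j)) ≤ δ := by
      have hw := wNorm_lambda_le x (ι h0) f
      have : ‖ι h0 - f‖ = ‖f - g‖ := by rw [hgh0, norm_sub_rev]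
      rw [this] at hw
      linarith
    have hh0' : ‖h0‖ ≤ 1 := hh0
    nlinarith [hh0']
  have hwfhat : wNorm (fun j => (ι fhat) (x j) - f (x j)) ≤ ε := by
    nlinarith [norm_nonneg fhat]
  have hfhatnorm : ‖fhat‖ ≤ 1 + μ := by
    have hw0 := wNorm_nonneg (fun j => (ι fhat) (x j) - f (x j))
    nlinarith
  -- the rescaled minimizer
  set t := max 1 ‖fhat‖ with htdef
  have ht1 : 1 ≤ t := le_max_left _ _
  have htpos : 0 < t := by linarith
  have htf : ‖fhat‖ ≤ t := le_max_right _ _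
  have htμ : t ≤ 1 + μ := max_le (by linarith) hfhatnorm
  have hinvle : t⁻¹ ≤ 1 := inv_le_one_of_one_le₀ ht1
  have hinvpos : 0 < t⁻¹ := inv_pos.mpr htpos
  set htil : Y := t⁻¹ • fhat with htildef
  set ftil := ι htil with hftildef
  have hh1norm : ‖htil‖ ≤ 1 := by
    rw [htildef, norm_smul, norm_inv, Real.norm_eq_abs, abs_of_pos htpos]
    rw [inv_mul_le_iff₀ htpos, mul_one]
    exact htf
  have hdiffeq : ι fhat - ftil = (1 - t⁻¹) • ι fhat := by
    rw [hftildef, htildef, map_smul, sub_smul, one_smul]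
  have hdiff : ‖ι fhat - ftil‖ ≤ ε := by
    rw [hdiffeq, norm_smul (1 - t⁻¹) (ι fhat), Real.norm_eq_abs,
      abs_of_nonneg (by linarith : (0:ℝ) ≤ 1 - t⁻¹)]
    rcases le_or_gt ‖fhat‖ 1 with hc | hc
    · have htv : t = 1 := max_eq_left hc
      rw [htv]
      simp only [inv_one, sub_self, zero_mul]
      linarith
    · have htv : t = ‖fhat‖ := max_eq_right hc.le
      have hb := hCY fhat
      have hCY0 : 0 ≤ CY := by nlinarith [norm_nonneg (ι fhat)]
      have hinv : t⁻¹ * t = 1 := inv_mul_cancel₀ htpos.ne'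
      have key : (1 - t⁻¹) * ‖ι fhat‖ ≤ (1 - t⁻¹) * (CY * t) := by
        apply mul_le_mul_of_nonneg_left _ (by linarith)
        rw [htv]; exact hb
      have e2 : (1 - t⁻¹) * (CY * t) = CY * (t - 1) := by
        have : (1 - t⁻¹) * (CY * t) = CY * t - CY * (t⁻¹ * t) := by ring
        rw [this, hinv]; ring
      rw [e2] at key
      nlinarith
  -- ftil is in K(w, 2ε)
  have hftilK : ftil ∈ ι '' {g : Y | ‖g‖ ≤ 1} := ⟨htil, hh1norm, rfl⟩
  have hwftil : wNorm (fun j => ftil (x j) - f (x j)) ≤ 2 * ε := by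
    have tri := wNorm_add_le (fun j => ftil (x j) - (ι fhat) (x j))
      (fun j => (ι fhat) (x j) - f (x j))
    have e : (fun j => ftil (x j) - (ι fhat) (x j) + ((ι fhat) (x j) - f (x j)))
        = fun j => ftil (x j) - f (x j) := by funext j; ring
    rw [e] at tri
    have h2 : wNorm (fun j => ftil (x j) - (ι fhat) (x j)) ≤ ε := by
      calc wNorm (fun j => ftil (x j) - (ι fhat) (x j)) ≤ ‖ftil - ι fhat‖ :=
            wNorm_lambda_le x ftil (ι fhat)
        _ = ‖ι fhat - ftil‖ := norm_sub_rev _ _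
        _ ≤ ε := hdiff
    linarith
  set S := {u ∈ ι '' {g : Y | ‖g‖ ≤ 1} |
      wNorm (fun j => u (x j) - f (x j)) ≤ 2 * ε} with hSdef
  have hfS : f ∈ S := by
    refine ⟨hf, ?_⟩
    have : (fun j => f (x j) - f (x j)) = fun _ => (0 : ℝ) := by funext j; ring
    rw [this]
    have : wNorm (fun _ : Fin m => (0 : ℝ)) = 0 := by
      simp [wNorm]
    rw [this]; linarith
  have hftilS : ftil ∈ S := ⟨hftilK, hwftil⟩
  -- Chebyshev radius bound
  have hcheb : ‖J f - J ftil‖ / 2 ≤ chebRadMap (fun u => J u) S := by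
    apply le_ciInf
    intro z
    have hbdd : BddAbove (Set.range fun u : S => ‖J (u : C(Ω, ℝ)) - z‖) := by
      refine ⟨CX * |CY| + ‖z‖, ?_⟩
      rintro r ⟨⟨u, huS⟩, rfl⟩
      obtain ⟨gu, hgu, rfl⟩ := huS.1
      have h1 : ‖ι gu‖ ≤ |CY| := by
        have hb := hCY gu
        have : CY * ‖gu‖ ≤ |CY| := by
          calc CY * ‖gu‖ ≤ |CY| * ‖gu‖ :=
                mul_le_mul_of_nonneg_right (le_abs_self _) (norm_nonneg _)
            _ ≤ |CY| * 1 := mul_le_mul_of_nonneg_left hgu (abs_nonneg _)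
            _ = |CY| := mul_one _
        linarith
      calc ‖J (ι gu) - z‖ ≤ ‖J (ι gu)‖ + ‖z‖ := norm_sub_le _ _
        _ ≤ CX * ‖ι gu‖ + ‖z‖ := by linarith [hJ (ι gu)]
        _ ≤ CX * |CY| + ‖z‖ := by nlinarith [mul_le_mul_of_nonneg_left h1 hCX]
    have h1 := le_ciSup hbdd (⟨f, hfS⟩ : S)
    have h2 := le_ciSup hbdd (⟨ftil, hftilS⟩ : S)
    simp only at h1 h2
    have htri : ‖J f - J ftil‖ ≤ ‖J f - z‖ + ‖J ftil - z‖ := by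
      have := norm_sub_le (J f - z) (J ftil - z)
      simpa [sub_sub_sub_cancel_right] using this
    linarith
  have h3 : ‖J ftil - J (ι fhat)‖ ≤ CX * ε := by
    have he : J ftil - J (ι fhat) = J (ftil - ι fhat) := (map_sub J _ _).symm
    rw [he]
    calc ‖J (ftil - ι fhat)‖ ≤ CX * ‖ftil - ι fhat‖ := hJ _
      _ = CX * ‖ι fhat - ftil‖ := by rw [norm_sub_rev]
      _ ≤ CX * ε := mul_le_mul_of_nonneg_left hdiff hCX
  have htri2 : ‖J f - J (ι fhat)‖ ≤ ‖J f - J ftil‖ + ‖J ftil - J (ι fhat)‖ := by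
    have := norm_sub_le (J f - J ftil + (J ftil - J (ι fhat))) 0
    calc ‖J f - J (ι fhat)‖ = ‖J f - J ftil + (J ftil - J (ι fhat))‖ := by
          congr 1; abel
      _ ≤ _ := norm_add_le _ _
  linarith
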